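/- arXiv:1710.10965 — 3 statements merged into one kernel-verified Lean document; each statement's English description precedes it below -/
import Mathlib

section
/- Let X₁ be the real skew-symmetric matrix with rows (0,1,0),(−1,0,0),(0,0,0) and X₂ the one with rows (0,0,1),(0,0,0),(−1,0,0), and set Y₁ := X₁·Z₀ − Z₀·X₁ and Y₂ := X₂·Z₀ − Z₀·X₂. Then, with respect to the real Frobenius inner product ⟨A,B⟩ := tr(A·Bᵀ) on real 3×3 matrices: the real part and the imaginary part of Y₁ are orthogonal, the real part and the imaginary part of Y₂ are orthogonal, the Frobenius norm of Re(Y₁) equals twice the Frobenius norm of Im(Y₁), and the Frobenius norm of Im(Y₂) equals twice the Frobenius norm of Re(Y₂). (These relations show that Y₁ and Y₂ have characteristic angle arctan(1/2).) -/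
open Matrix

/-- The point `Z₀ = (1/2)·[[0,1,i],[1,0,0],[i,0,0]]` of the complex quadric. -/
noncomputable def Z₀ : Matrix (Fin 3) (Fin 3) ℂ :=
  (1/2 : ℂ) • !![0, 1, Complex.I; 1, 0, 0; Complex.I, 0, 0]

/-- `X₁`, viewed as a complex matrix. -/
noncomputable def X₁ : Matrix (Fin 3) (Fin 3) ℂ := !![0, 1, 0; -1, 0, 0; 0, 0, 0]

/-- `X₂`, viewed as a complex matrix. -/
noncomputable def X₂ : Matrix (Fin 3) (Fin 3) ℂ := !![0, 0, 1; 0, 0, 0; -1, 0, 0]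

/-- `Y₁ = X₁·Z₀ − Z₀·X₁`. -/
noncomputable def Y₁ : Matrix (Fin 3) (Fin 3) ℂ := X₁ * Z₀ - Z₀ * X₁

/-- `Y₂ = X₂·Z₀ − Z₀·X₂`. -/
noncomputable def Y₂ : Matrix (Fin 3) (Fin 3) ℂ := X₂ * Z₀ - Z₀ * X₂

/-- The entrywise real part of a complex matrix. -/
noncomputable def reMat (Y : Matrix (Fin 3) (Fin 3) ℂ) : Matrix (Fin 3) (Fin 3) ℝ :=
  Y.map Complex.re

/-- The entrywise imaginary part of a complex matrix. -/
noncomputable def imMat (Y : Matrix (Fin 3) (Fin 3) ℂ) : Matrix (Fin 3) (Fin 3) ℝ :=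
  Y.map Complex.im

/-- The real Frobenius inner product `⟨A,B⟩ = tr(A·Bᵀ)` on real 3×3 matrices. -/
noncomputable def frobInner (A B : Matrix (Fin 3) (Fin 3) ℝ) : ℝ := (A * Bᵀ).trace

/-- The Frobenius norm of a real 3×3 matrix. -/
noncomputable def frobNorm (A : Matrix (Fin 3) (Fin 3) ℝ) : ℝ := Real.sqrt ((A * Aᵀ).trace)

lemma sqrt_two_eq : Real.sqrt 2 = 2 * Real.sqrt (1/2) := by
  rw [show (1/2:ℝ) = 2⁻¹ by norm_num, Real.sqrt_inv]
  field_simp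
  exact Real.sq_sqrt (by norm_num)


/-- With respect to the Frobenius inner product, `Re Y₁ ⊥ Im Y₁` and `Re Y₂ ⊥ Im Y₂`, while
`‖Re Y₁‖ = 2·‖Im Y₁‖` and `‖Im Y₂‖ = 2·‖Re Y₂‖`; so `Y₁`, `Y₂` have characteristic angle
`arctan(1/2)`. -/
theorem characteristic_angle_of_Y₁_Y₂ :
    frobInner (reMat Y₁) (imMat Y₁) = 0 ∧
    frobInner (reMat Y₂) (imMat Y₂) = 0 ∧
    frobNorm (reMat Y₁) = 2 * frobNorm (imMat Y₁) ∧
    frobNorm (imMat Y₂) = 2 * frobNorm (reMat Y₂) := by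
  have h1 : frobInner (reMat Y₁) (imMat Y₁) = 0 := by
    simp [frobInner, reMat, imMat, Y₁, Z₀, X₁, Matrix.trace, Matrix.mul_apply,
      Fin.sum_univ_three, Matrix.transpose_apply, Matrix.vecHead, Matrix.vecTail]
  have h2 : frobInner (reMat Y₂) (imMat Y₂) = 0 := by
    simp [frobInner, reMat, imMat, Y₂, Z₀, X₂, Matrix.trace, Matrix.mul_apply,
      Fin.sum_univ_three, Matrix.transpose_apply, Matrix.vecHead, Matrix.vecTail]
  refine ⟨h1, h2, ?_, ?_⟩
  · have hr : ((reMat Y₁ * (reMat Y₁)ᵀ).trace : ℝ) = 2 := by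
      simp [reMat, Y₁, Z₀, X₁, Matrix.trace, Matrix.mul_apply,
        Fin.sum_univ_three, Matrix.transpose_apply, Matrix.vecHead, Matrix.vecTail]
      norm_num
    have hi : ((imMat Y₁ * (imMat Y₁)ᵀ).trace : ℝ) = 1/2 := by
      simp [imMat, Y₁, Z₀, X₁, Matrix.trace, Matrix.mul_apply,
        Fin.sum_univ_three, Matrix.transpose_apply, Matrix.vecHead, Matrix.vecTail]
      norm_num
    rw [frobNorm, frobNorm, hr, hi, sqrt_two_eq]
  · have hr : ((reMat Y₂ * (reMat Y₂)ᵀ).trace : ℝ) = 1/2 := by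
      simp [reMat, Y₂, Z₀, X₂, Matrix.trace, Matrix.mul_apply,
        Fin.sum_univ_three, Matrix.transpose_apply, Matrix.vecHead, Matrix.vecTail]
      norm_num
    have hi : ((imMat Y₂ * (imMat Y₂)ᵀ).trace : ℝ) = 2 := by
      simp [imMat, Y₂, Z₀, X₂, Matrix.trace, Matrix.mul_apply,
        Fin.sum_univ_three, Matrix.transpose_apply, Matrix.vecHead, Matrix.vecTail]
      norm_num
    rw [frobNorm, frobNorm, hr, hi, sqrt_two_eq]
end

section
/- The following seven elements of ⋀³ℂ⁶ lie in the kernel of the contraction κ and are linearly independent over ℂ: e₁∧e₂∧e₃; (J·e₁)∧e₂∧e₃; e₁∧(J·e₂)∧e₃; e₁∧e₂∧(J·e₃); e₁∧e₂∧(J·e₂) − e₁∧e₃∧(J·e₃); e₂∧e₁∧(J·e₁) − e₂∧e₃∧(J·e₃); e₃∧e₁∧(J·e₁) − e₃∧e₂∧(J·e₂). -/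
/-- The quaternionic structure `J` on ℂ⁶. -/
noncomputable def J6 : (Fin 6 → ℂ) → (Fin 6 → ℂ) := fun v k =>
  if (k : ℕ) < 3 then -(starRingEnd ℂ) (v (k + 3)) else (starRingEnd ℂ) (v (k - 3))

/-- The standard Hermitian product on ℂ⁶. -/
noncomputable def H6 (v w : Fin 6 → ℂ) : ℂ := ∑ k, v k * (starRingEnd ℂ) (w k)

/-- The complex symplectic form `ω(v,w) = H(v, J·w)` on ℂ⁶. -/
noncomputable def ω6 (v w : Fin 6 → ℂ) : ℂ := H6 v (J6 w)

/-- The trilinear map `T(v₁,v₂,v₃) = ω(v₁,v₂)·v₃ + ω(v₂,v₃)·v₁ + ω(v₃,v₁)·v₂`. -/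
noncomputable def T6 (v₁ v₂ v₃ : Fin 6 → ℂ) : Fin 6 → ℂ :=
  ω6 v₁ v₂ • v₃ + ω6 v₂ v₃ • v₁ + ω6 v₃ v₁ • v₂

/-- The decomposable element `v₁ ∧ v₂ ∧ v₃` of the third exterior power `⋀³ℂ⁶`. -/
noncomputable def wedge3 (v : Fin 3 → (Fin 6 → ℂ)) : ⋀[ℂ]^3 (Fin 6 → ℂ) :=
  ⟨ExteriorAlgebra.ιMulti ℂ 3 v, ExteriorAlgebra.ιMulti_range ℂ 3 ⟨v, rfl⟩⟩

/-- The standard basis vectors of ℂ⁶. -/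
noncomputable def e6 (i : Fin 6) : Fin 6 → ℂ := Pi.single i 1

/-- The seven elements
`e₁∧e₂∧e₃`, `(Je₁)∧e₂∧e₃`, `e₁∧(Je₂)∧e₃`, `e₁∧e₂∧(Je₃)`,
`e₁∧e₂∧(Je₂) − e₁∧e₃∧(Je₃)`, `e₂∧e₁∧(Je₁) − e₂∧e₃∧(Je₃)`,
`e₃∧e₁∧(Je₁) − e₃∧e₂∧(Je₂)` of `⋀³ℂ⁶`. -/
noncomputable def xi : Fin 7 → (⋀[ℂ]^3 (Fin 6 → ℂ)) :=
  ![wedge3 ![e6 0, e6 1, e6 2],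
    wedge3 ![J6 (e6 0), e6 1, e6 2],
    wedge3 ![e6 0, J6 (e6 1), e6 2],
    wedge3 ![e6 0, e6 1, J6 (e6 2)],
    wedge3 ![e6 0, e6 1, J6 (e6 1)] - wedge3 ![e6 0, e6 2, J6 (e6 2)],
    wedge3 ![e6 1, e6 0, J6 (e6 0)] - wedge3 ![e6 1, e6 2, J6 (e6 2)],
    wedge3 ![e6 2, e6 0, J6 (e6 0)] - wedge3 ![e6 2, e6 1, J6 (e6 1)]]

lemma J6e0 : J6 (e6 0) = e6 3 := by
  funext k; fin_cases k <;> simp [J6, e6, Pi.single, Function.update]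

lemma J6e1 : J6 (e6 1) = e6 4 := by
  funext k; fin_cases k <;> simp [J6, e6, Pi.single, Function.update]

lemma J6e2 : J6 (e6 2) = e6 5 := by
  funext k; fin_cases k <;> simp [J6, e6, Pi.single, Function.update]

lemma xi0 : xi 0 = wedge3 ![e6 0, e6 1, e6 2] := rfl
lemma xi1 : xi 1 = wedge3 ![e6 3, e6 1, e6 2] := by
  rw [show xi 1 = wedge3 ![J6 (e6 0), e6 1, e6 2] from rfl, J6e0]
lemma xi2 : xi 2 = wedge3 ![e6 0, e6 4, e6 2] := by
  rw [show xi 2 = wedge3 ![e6 0, J6 (e6 1), e6 2] from rfl, J6e1]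
lemma xi3 : xi 3 = wedge3 ![e6 0, e6 1, e6 5] := by
  rw [show xi 3 = wedge3 ![e6 0, e6 1, J6 (e6 2)] from rfl, J6e2]
lemma xi4 : xi 4 = wedge3 ![e6 0, e6 1, e6 4] - wedge3 ![e6 0, e6 2, e6 5] := by
  rw [show xi 4 = wedge3 ![e6 0, e6 1, J6 (e6 1)] - wedge3 ![e6 0, e6 2, J6 (e6 2)] from rfl,
    J6e1, J6e2]
lemma xi5 : xi 5 = wedge3 ![e6 1, e6 0, e6 3] - wedge3 ![e6 1, e6 2, e6 5] := by
  rw [show xi 5 = wedge3 ![e6 1, e6 0, J6 (e6 0)] - wedge3 ![e6 1, e6 2, J6 (e6 2)] from rfl,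
    J6e0, J6e2]
lemma xi6 : xi 6 = wedge3 ![e6 2, e6 0, e6 3] - wedge3 ![e6 2, e6 1, e6 4] := by
  rw [show xi 6 = wedge3 ![e6 2, e6 0, J6 (e6 0)] - wedge3 ![e6 2, e6 1, J6 (e6 1)] from rfl,
    J6e0, J6e1]

/-- The 3×3-minor determinant as an alternating form on `(ℂ⁶)³`. -/
noncomputable def Dform (s : Fin 3 → Fin 6) : (Fin 6 → ℂ) [⋀^Fin 3]→ₗ[ℂ] ℂ :=
  Matrix.detRowAlternating.compLinearMap (LinearMap.funLeft ℂ ℂ s)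

noncomputable def famD (s : Fin 3 → Fin 6) : ∀ i : ℕ, (Fin 6 → ℂ) [⋀^Fin i]→ₗ[ℂ] ℂ :=
  fun i => if h : i = 3 then h ▸ (Dform s) else 0

/-- The linear functional on `⋀³ℂ⁶` induced by `Dform s`. -/
noncomputable def φD (s : Fin 3 → Fin 6) : (⋀[ℂ]^3 (Fin 6 → ℂ)) →ₗ[ℂ] ℂ :=
  (ExteriorAlgebra.liftAlternating (famD s)).comp (Submodule.subtype _)

lemma φD_wedge3 (s : Fin 3 → Fin 6) (v : Fin 3 → (Fin 6 → ℂ)) :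
    φD s (wedge3 v) = Matrix.det (Matrix.of fun a b => v a (s b)) := by
  simp only [φD, LinearMap.comp_apply, Submodule.subtype_apply, wedge3,
    ExteriorAlgebra.liftAlternating_apply_ιMulti, famD, dif_pos rfl]
  rfl

lemma φD_ew (s : Fin 3 → Fin 6) (a b c : Fin 6) :
    φD s (wedge3 ![e6 a, e6 b, e6 c]) =
      ((if s 0 = a then 1 else 0) * (if s 1 = b then 1 else 0) * (if s 2 = c then 1 else 0)
      - (if s 0 = a then 1 else 0) * (if s 2 = b then 1 else 0) * (if s 1 = c then 1 else 0)
      - (if s 1 = a then 1 else 0) * (if s 0 = b then 1 else 0) * (if s 2 = c then 1 else 0)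
      + (if s 1 = a then 1 else 0) * (if s 2 = b then 1 else 0) * (if s 0 = c then 1 else 0)
      + (if s 2 = a then 1 else 0) * (if s 0 = b then 1 else 0) * (if s 1 = c then 1 else 0)
      - (if s 2 = a then 1 else 0) * (if s 1 = b then 1 else 0) * (if s 0 = c then 1 else 0)
        : ℂ) := by
  rw [φD_wedge3]
  simp [Matrix.det_fin_three, e6, Pi.single_apply]

/-- For each `j` there is a linear functional separating `xi j` from the other six. -/
lemma sep (j : Fin 7) :
    ∃ s : Fin 3 → Fin 6, ∀ i : Fin 7, φD s (xi i) = if i = j then 1 else 0 := by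
  fin_cases j
  · exact ⟨![0,1,2], by
      intro i; fin_cases i <;> simp [xi0, xi1, xi2, xi3, xi4, xi5, xi6, map_sub, φD_ew]⟩
  · exact ⟨![3,1,2], by
      intro i; fin_cases i <;> simp [xi0, xi1, xi2, xi3, xi4, xi5, xi6, map_sub, φD_ew]⟩
  · exact ⟨![0,4,2], by
      intro i; fin_cases i <;> simp [xi0, xi1, xi2, xi3, xi4, xi5, xi6, map_sub, φD_ew]⟩
  · exact ⟨![0,1,5], by
      intro i; fin_cases i <;> simp [xi0, xi1, xi2, xi3, xi4, xi5, xi6, map_sub, φD_ew]⟩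
  · exact ⟨![0,1,4], by
      intro i; fin_cases i <;> simp [xi0, xi1, xi2, xi3, xi4, xi5, xi6, map_sub, φD_ew]⟩
  · exact ⟨![1,0,3], by
      intro i; fin_cases i <;> simp [xi0, xi1, xi2, xi3, xi4, xi5, xi6, map_sub, φD_ew]⟩
  · exact ⟨![2,0,3], by
      intro i; fin_cases i <;> simp [xi0, xi1, xi2, xi3, xi4, xi5, xi6, map_sub, φD_ew]⟩

/-- The seven listed elements of `⋀³ℂ⁶` lie in the kernel of the contraction `κ` and are
linearly independent over ℂ. -/
theorem seven_elements_in_ker_contraction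
    (κ : (⋀[ℂ]^3 (Fin 6 → ℂ)) →ₗ[ℂ] (Fin 6 → ℂ))
    (hκ : ∀ v₁ v₂ v₃ : Fin 6 → ℂ, κ (wedge3 ![v₁, v₂, v₃]) = T6 v₁ v₂ v₃) :
    (∀ i : Fin 7, xi i ∈ LinearMap.ker κ) ∧ LinearIndependent ℂ xi := by
  constructor
  · have h0 : xi 0 ∈ LinearMap.ker κ := by
      rw [LinearMap.mem_ker, xi0, hκ]
      funext k; simp [T6, ω6, H6, J6, e6, Fin.sum_univ_six, Pi.single_apply]
    have h1 : xi 1 ∈ LinearMap.ker κ := by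
      rw [LinearMap.mem_ker, xi1, hκ]
      funext k; simp [T6, ω6, H6, J6, e6, Fin.sum_univ_six, Pi.single_apply]
    have h2 : xi 2 ∈ LinearMap.ker κ := by
      rw [LinearMap.mem_ker, xi2, hκ]
      funext k; simp [T6, ω6, H6, J6, e6, Fin.sum_univ_six, Pi.single_apply]
    have h3 : xi 3 ∈ LinearMap.ker κ := by
      rw [LinearMap.mem_ker, xi3, hκ]
      funext k; simp [T6, ω6, H6, J6, e6, Fin.sum_univ_six, Pi.single_apply]
    have h4 : xi 4 ∈ LinearMap.ker κ := by
      rw [LinearMap.mem_ker, xi4, map_sub, hκ, hκ]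
      funext k; simp [T6, ω6, H6, J6, e6, Fin.sum_univ_six, Pi.single_apply]
    have h5 : xi 5 ∈ LinearMap.ker κ := by
      rw [LinearMap.mem_ker, xi5, map_sub, hκ, hκ]
      funext k; simp [T6, ω6, H6, J6, e6, Fin.sum_univ_six, Pi.single_apply]
    have h6 : xi 6 ∈ LinearMap.ker κ := by
      rw [LinearMap.mem_ker, xi6, map_sub, hκ, hκ]
      funext k; simp [T6, ω6, H6, J6, e6, Fin.sum_univ_six, Pi.single_apply]
    intro i
    fin_cases i
    exacts [h0, h1, h2, h3, h4, h5, h6]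
  · rw [Fintype.linearIndependent_iff]
    intro g hg j
    obtain ⟨s, hs⟩ := sep j
    have h := congrArg (φD s) hg
    simpa [map_sum, map_smul, hs] using h
end

section
/- For all v₁, v₂, v₃ ∈ ℂ⁶ one has ω(J·v₁, J·v₂)·(J·v₃) + ω(J·v₂, J·v₃)·(J·v₁) + ω(J·v₃, J·v₁)·(J·v₂) = J( ω(v₁,v₂)·v₃ + ω(v₂,v₃)·v₁ + ω(v₃,v₁)·v₂ ); that is, on decomposable elements the contraction satisfies κ(J·v₁ ∧ J·v₂ ∧ J·v₃) = J(κ(v₁∧v₂∧v₃)), so κ is J-equivariant. -/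
lemma J6_add (v w : Fin 6 → ℂ) : J6 (v + w) = J6 v + J6 w := by
  funext k; simp only [J6, Pi.add_apply, map_add]; split <;> ring

lemma J6_smul (a : ℂ) (v : Fin 6 → ℂ) : J6 (a • v) = (starRingEnd ℂ) a • J6 v := by
  funext k; simp only [J6, Pi.smul_apply, smul_eq_mul, map_mul]; split <;> ring

lemma ω6_J (v w : Fin 6 → ℂ) : ω6 (J6 v) (J6 w) = (starRingEnd ℂ) (ω6 v w) := by
  simp [ω6, H6, J6, Fin.sum_univ_six, map_add, map_mul, map_neg,
    show ¬((3:Fin 6):ℕ) < 3 by decide, show ¬((4:Fin 6):ℕ) < 3 by decide,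
    show ¬((5:Fin 6):ℕ) < 3 by decide]
  ring

/-- On decomposable elements the contraction is `J`-equivariant:
`κ(Jv₁ ∧ Jv₂ ∧ Jv₃) = J(κ(v₁∧v₂∧v₃))`. -/
theorem contraction_J_equivariant (v₁ v₂ v₃ : Fin 6 → ℂ) :
    ω6 (J6 v₁) (J6 v₂) • J6 v₃ + ω6 (J6 v₂) (J6 v₃) • J6 v₁ + ω6 (J6 v₃) (J6 v₁) • J6 v₂ =
      J6 (ω6 v₁ v₂ • v₃ + ω6 v₂ v₃ • v₁ + ω6 v₃ v₁ • v₂) := by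
  rw [J6_add, J6_add, J6_smul, J6_smul, J6_smul, ω6_J, ω6_J, ω6_J]
end
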